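/- If k, m, n are positive integers with n > m and F_k = P_m · P_n, then |(8/√5) · α^k · γ^{−(m+n)} − 1| < 16/(√5 · γ^{2m}). -/

import Mathlib

/-- The Pell sequence: P 0 = 0, P 1 = 1, P (n+2) = 2 * P (n+1) + P n. -/
def pell : ℕ → ℕ
  | 0 => 0
  | 1 => 1
  | n + 2 => 2 * pell (n + 1) + pell n

lemma pell_binet (n : ℕ) :
    (pell n : ℝ) * (2 * Real.sqrt 2) = (1 + Real.sqrt 2) ^ n - (1 - Real.sqrt 2) ^ n := by
  have hs2 : Real.sqrt 2 ^ 2 = 2 := Real.sq_sqrt (by norm_num)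
  induction n using Nat.twoStepInduction with
  | zero => simp [pell]
  | one => simp [pell]; ring
  | more n ih1 ih2 =>
    have hg2 : (1 + Real.sqrt 2) ^ 2 = 2 * (1 + Real.sqrt 2) + 1 := by linear_combination hs2
    have hd2 : (1 - Real.sqrt 2) ^ 2 = 2 * (1 - Real.sqrt 2) + 1 := by linear_combination hs2
    have hpnat : pell (n + 2) = 2 * pell (n + 1) + pell n := rfl
    rw [hpnat]
    push_cast
    linear_combination 2 * ih2 + ih1 + (1 + Real.sqrt 2) ^ n * hg2 -
      (1 - Real.sqrt 2) ^ n * hd2 +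
      (2 * (1 - Real.sqrt 2) ^ n - 2 * (1 + Real.sqrt 2) ^ n) * hs2

/-- If k, m, n are positive integers with n > m and F_k = P_m · P_n, then
|(8/√5)·α^k·γ^{−(m+n)} − 1| < 16/(√5·γ^{2m}), where α = (1+√5)/2 and γ = 1+√2. -/
theorem linear_form_FPP_1 (k m n : ℕ) (hk : 0 < k) (hm : 0 < m) (hmn : n > m)
    (h : Nat.fib k = pell m * pell n) :
    |(8 / Real.sqrt 5) * ((1 + Real.sqrt 5) / 2) ^ k *
        (1 + Real.sqrt 2) ^ (-((m : ℤ) + n)) - 1|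
      < 16 / (Real.sqrt 5 * (1 + Real.sqrt 2) ^ (2 * m)) := by
  set s2 := Real.sqrt 2 with hs2def
  set s5 := Real.sqrt 5 with hs5def
  have hs2sq : s2 ^ 2 = 2 := Real.sq_sqrt (by norm_num)
  have hs5sq : s5 ^ 2 = 5 := Real.sq_sqrt (by norm_num)
  have hs2pos : 0 < s2 := Real.sqrt_pos.mpr (by norm_num)
  have hs5pos : 0 < s5 := Real.sqrt_pos.mpr (by norm_num)
  have hs2gt1 : 1 < s2 := by nlinarith
  have hs2lt : s2 < 3 / 2 := by nlinarith
  have hs5gt2 : 2 < s5 := by nlinarith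
  have hs5lt3 : s5 < 3 := by nlinarith
  set g : ℝ := 1 + s2 with hgdef
  set d : ℝ := 1 - s2 with hddef
  set a : ℝ := (1 + s5) / 2 with hadef
  set b : ℝ := (1 - s5) / 2 with hbdef
  have hgpos : 0 < g := by simp only [hgdef]; linarith
  -- Binet for Fibonacci
  have hfib : (Nat.fib k : ℝ) = (a ^ k - b ^ k) / s5 := by
    have := Real.coe_fib_eq k
    unfold Real.goldenRatio Real.goldenConj at this
    rw [this]
  have ha : (Nat.fib k : ℝ) * s5 = a ^ k - b ^ k := by
    rw [hfib]; field_simp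
  -- Binet for Pell
  have hpm : (pell m : ℝ) * (2 * s2) = g ^ m - d ^ m := pell_binet m
  have hpn : (pell n : ℝ) * (2 * s2) = g ^ n - d ^ n := pell_binet n
  have hprod : (Nat.fib k : ℝ) = (pell m : ℝ) * (pell n : ℝ) := by exact_mod_cast h
  have h8 : 8 * (Nat.fib k : ℝ) = (g ^ m - d ^ m) * (g ^ n - d ^ n) := by
    rw [← hpm, ← hpn, hprod]
    linear_combination (-4 * (pell m : ℝ) * (pell n : ℝ)) * hs2sq
  have ha2 : 8 / s5 * a ^ k = 8 * (Nat.fib k : ℝ) + 8 / s5 * b ^ k := by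
    field_simp
    linear_combination (-1) * ha
  have hmain : 8 / s5 * a ^ k - g ^ (m + n)
      = d ^ (m + n) - g ^ m * d ^ n - g ^ n * d ^ m + 8 / s5 * b ^ k := by
    rw [ha2, pow_add, pow_add]
    linear_combination h8
  have hT : (0 : ℝ) < g ^ (m + n) := pow_pos hgpos _
  have hz : (g : ℝ) ^ (-((m : ℤ) + n)) = (g ^ (m + n) : ℝ)⁻¹ := by
    rw [show -((m : ℤ) + n) = -((m + n : ℕ) : ℤ) by push_cast; ring, zpow_neg, zpow_natCast]
  set N : ℝ := d ^ (m + n) - g ^ m * d ^ n - g ^ n * d ^ m + 8 / s5 * b ^ k with hNdef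
  have hkey : 8 / s5 * a ^ k * (g ^ (m + n))⁻¹ - 1 = N / g ^ (m + n) := by
    rw [← hmain]
    field_simp
  clear_value N a b g d s2 s5
  rw [hz, hkey, abs_div, abs_of_pos hT,
    div_lt_div_iff₀ hT (mul_pos hs5pos (pow_pos hgpos _))]
  -- now: |N| * (s5 * g^(2m)) < 16 * g^(m+n)
  set w : ℝ := g ^ (n - m) with hwdef
  clear_value w
  have hwpos : 0 < w := by rw [hwdef]; exact pow_pos hgpos _
  have hg2 : (2 : ℝ) ≤ g := by simp only [hgdef]; linarith
  have hw2 : (2 : ℝ) ≤ w := by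
    rw [hwdef]; exact le_trans hg2 (le_self_pow₀ (by linarith) (by omega))
  have hsplit : g ^ (m + n) = g ^ (2 * m) * w := by
    rw [hwdef, ← pow_add]; congr 1; omega
  have habsd : |d| = s2 - 1 := by
    rw [hddef, abs_of_nonpos (by linarith)]; ring
  have habsb : |b| = (s5 - 1) / 2 := by
    rw [hbdef, abs_of_nonpos (by linarith)]; ring
  have hginv : (s2 - 1) * g = 1 := by
    simp only [hgdef]; linear_combination hs2sq
  have hd01 : 0 ≤ s2 - 1 := by linarith
  have hd11 : s2 - 1 ≤ 1 := by linarith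
  -- bound each term
  have e1 : |d ^ (m + n)| ≤ 1 := by
    rw [abs_pow, habsd]; exact pow_le_one₀ hd01 hd11
  have e2 : |g ^ m * d ^ n| ≤ 1 := by
    rw [abs_mul, abs_pow, abs_pow, abs_of_pos hgpos, habsd]
    have heq : g ^ m * (s2 - 1) ^ n = (s2 - 1) ^ (n - m) := by
      calc g ^ m * (s2 - 1) ^ n = g ^ m * ((s2 - 1) ^ m * (s2 - 1) ^ (n - m)) := by
            rw [← pow_add]; congr 2; omega
        _ = ((s2 - 1) * g) ^ m * (s2 - 1) ^ (n - m) := by rw [mul_pow]; ring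
        _ = (s2 - 1) ^ (n - m) := by rw [hginv, one_pow, one_mul]
    rw [heq]; exact pow_le_one₀ hd01 hd11
  have e3 : |g ^ n * d ^ m| = w := by
    rw [hwdef, abs_mul, abs_pow, abs_pow, abs_of_pos hgpos, habsd]
    calc g ^ n * (s2 - 1) ^ m = g ^ (n - m) * g ^ m * (s2 - 1) ^ m := by
          rw [← pow_add]; congr 2; omega
      _ = g ^ (n - m) * ((s2 - 1) * g) ^ m := by rw [mul_pow]; ring
      _ = g ^ (n - m) := by rw [hginv, one_pow, mul_one]
  have e4 : |8 / s5 * b ^ k| ≤ 4 := by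
    rw [abs_mul, abs_pow, habsb, abs_of_pos (div_pos (by norm_num) hs5pos)]
    have hb1 : ((s5 - 1) / 2 : ℝ) ^ k ≤ 1 := pow_le_one₀ (by linarith) (by linarith)
    calc 8 / s5 * ((s5 - 1) / 2) ^ k ≤ 8 / s5 * 1 := by
          exact mul_le_mul_of_nonneg_left hb1 (le_of_lt (div_pos (by norm_num) hs5pos))
      _ ≤ 4 := by rw [mul_one, div_le_iff₀ hs5pos]; linarith
  have hN : |N| ≤ 6 + w := by
    have b1 := abs_le.mp e1
    have b2 := abs_le.mp e2
    have b3 := abs_le.mp (le_of_eq e3)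
    have b4 := abs_le.mp e4
    apply abs_le.mpr
    constructor <;> simp only [hNdef] <;> linarith
  have hG : (0 : ℝ) < g ^ (2 * m) := pow_pos hgpos _
  have h1 : (6 + w) * s5 < 16 * w := by
    have h0 : (6 + w) * s5 < (6 + w) * 3 :=
      mul_lt_mul_of_pos_left hs5lt3 (by linarith)
    linarith
  calc |N| * (s5 * g ^ (2 * m)) ≤ (6 + w) * (s5 * g ^ (2 * m)) :=
        mul_le_mul_of_nonneg_right hN (le_of_lt (mul_pos hs5pos hG))
    _ = (6 + w) * s5 * g ^ (2 * m) := by ring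
    _ < 16 * w * g ^ (2 * m) := mul_lt_mul_of_pos_right h1 hG
    _ = 16 * (g ^ (2 * m) * w) := by ring
    _ = 16 * g ^ (m + n) := by rw [hsplit]
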